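/- Fix a real number s > 0. Then there exist constants C > 0 and ℓ₀ > 0 such that for all 0 < ℓ < ℓ₀, the series Σ_{n=1}^∞ e^{-n s ℓ} / ( n (1 − e^{-n ℓ}) ) converges and | Σ_{n=1}^∞ e^{-n s ℓ} / ( n (1 − e^{-n ℓ}) ) − π²/(6ℓ) − (s − 1/2) · log(1 − e^{-s ℓ}) | ≤ C. -/

import Mathlib

open Real Filter Finset

namespace SelbergAux

lemma exp_neg_lt_one {x : ℝ} (hx : 0 < x) : Real.exp (-x) < 1 :=
  Real.exp_lt_one_iff.mpr (by linarith)

lemma one_sub_exp_neg_pos {x : ℝ} (hx : 0 < x) : 0 < 1 - Real.exp (-x) := by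
  have := exp_neg_lt_one hx; linarith

lemma mul_exp_neg_le {x : ℝ} : x * Real.exp (-x) ≤ 1 - Real.exp (-x) := by
  have h := Real.add_one_le_exp x
  have h2 := Real.exp_pos (-x)
  have h3 : Real.exp x * Real.exp (-x) = 1 := by rw [← Real.exp_add]; simp
  nlinarith [mul_le_mul_of_nonneg_right h h2.le]

noncomputable def ffun (x : ℝ) : ℝ := 1 - Real.exp (-x) - x * Real.exp (-x)

lemma ffun_nonneg {x : ℝ} : 0 ≤ ffun x := by
  have := mul_exp_neg_le (x := x); simp only [ffun]; linarith

lemma ffun_le_one {x : ℝ} (hx : 0 ≤ x) : ffun x ≤ 1 := by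
  have h1 := (Real.exp_pos (-x)).le
  have h2 : 0 ≤ x * Real.exp (-x) := mul_nonneg hx h1
  simp only [ffun]; linarith

lemma ffun_le_sq {x : ℝ} (hx : 0 ≤ x) : ffun x ≤ x ^ 2 := by
  have h : 1 - x ≤ Real.exp (-x) := by have := Real.add_one_le_exp (-x); linarith
  simp only [ffun]
  nlinarith [mul_nonneg (by linarith : (0:ℝ) ≤ 1 + x) (by linarith : 0 ≤ Real.exp (-x) - (1 - x))]

noncomputable def rfun (x : ℝ) : ℝ := (1 - Real.exp (-x))⁻¹ - x⁻¹ - 1/2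

lemma rfun_eq {x : ℝ} (hx : 0 < x) :
    rfun x = (x - 2 + (2 + x) * Real.exp (-x)) / (2 * x * (1 - Real.exp (-x))) := by
  have h1 := one_sub_exp_neg_pos hx
  rw [rfun]
  field_simp
  ring
-- Taylor bound: |exp(-x) - (1 - x + x^2/2)| ≤ (2/9) x^3 for 0 ≤ x ≤ 1
lemma exp_taylor3 {x : ℝ} (hx0 : 0 ≤ x) (hx1 : x ≤ 1) :
    |Real.exp (-x) - (1 - x + x ^ 2 / 2)| ≤ 2 / 9 * x ^ 3 := by
  have h := Real.exp_bound (x := -x) (by rwa [abs_neg, abs_of_nonneg hx0]) (n := 3) (by norm_num)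
  have hsum : ∑ m ∈ Finset.range 3, (-x) ^ m / m.factorial = 1 - x + x ^ 2 / 2 := by
    simp [Finset.sum_range_succ, Nat.factorial]
    ring
  rw [hsum] at h
  have habs : |(-x)| = x := by rwa [abs_neg, abs_of_nonneg]
  rw [habs] at h
  calc |Real.exp (-x) - (1 - x + x ^ 2 / 2)| ≤ x ^ 3 * (Nat.succ 3 / ((3:ℕ).factorial * 3)) := h
    _ ≤ 2 / 9 * x ^ 3 := by norm_num [Nat.factorial]; linarith

lemma abs_rfun_le_small {x : ℝ} (hx : 0 < x) (hx1 : x ≤ 1) : |rfun x| ≤ 2 * x := by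
  have hE := exp_taylor3 hx.le hx1
  set E := Real.exp (-x) with hEdef
  have hEpos : 0 < E := Real.exp_pos _
  have h1 : 0 < 1 - E := one_sub_exp_neg_pos hx
  -- numerator bound
  have hN : |x - 2 + (2 + x) * E| ≤ 7 / 6 * x ^ 3 := by
    rw [abs_le] at hE ⊢
    constructor <;> nlinarith [hE.1, hE.2, pow_pos hx 3]
  -- denominator lower bound
  have hE3 : (1:ℝ) / 3 ≤ E := by
    have h9 : Real.exp 1 < 2.7182818286 := Real.exp_one_lt_d9
    have : Real.exp (-1) ≤ E := Real.exp_le_exp.mpr (by linarith)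
    have hpos : (0:ℝ) < Real.exp 1 := Real.exp_pos 1
    have hinv : Real.exp (-1) = (Real.exp 1)⁻¹ := by rw [Real.exp_neg]
    have hle3 : Real.exp 1 ≤ 3 := by norm_num at h9; linarith
    have : (1:ℝ) / 3 ≤ Real.exp (-1) := by
      rw [hinv, ← one_div]
      exact one_div_le_one_div_of_le hpos hle3
    linarith
  have hd : 2 / 3 * x ^ 2 ≤ 2 * x * (1 - E) := by
    have hme : x * E ≤ 1 - E := mul_exp_neg_le
    nlinarith [mul_le_mul_of_nonneg_left hE3 (le_of_lt hx)]
  have hdpos : 0 < 2 * x * (1 - E) := by positivity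
  rw [rfun_eq hx, ← hEdef, abs_div, abs_of_pos hdpos, div_le_iff₀ hdpos]
  nlinarith [pow_pos hx 3]


lemma abs_rfun_le_half {x : ℝ} (hx : 1 ≤ x) : |rfun x| ≤ 1 / 2 := by
  have hx0 : 0 < x := by linarith
  set E := Real.exp (-x) with hEdef
  have hEpos : 0 < E := Real.exp_pos _
  have h1 : 0 < 1 - E := one_sub_exp_neg_pos hx0
  have hdpos : 0 < 2 * x * (1 - E) := by positivity
  have key : (x + 1) * E ≤ 1 := by
    have h := Real.add_one_le_exp x
    have h3 : Real.exp x * E = 1 := by rw [hEdef, ← Real.exp_add]; simp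
    nlinarith [mul_le_mul_of_nonneg_right h hEpos.le]
  rw [rfun_eq hx0, ← hEdef, abs_div, abs_of_pos hdpos, div_le_iff₀ hdpos, abs_le]
  constructor <;> nlinarith

lemma abs_rfun_div_le {m l : ℝ} (hm : 1 ≤ m) (hl : 0 < l) :
    |rfun (m * l)| / m ≤ 2 * l := by
  have hm0 : 0 < m := by linarith
  rcases le_or_gt (m * l) 1 with h | h
  · have hb := abs_rfun_le_small (mul_pos hm0 hl) h
    rw [div_le_iff₀ hm0]
    nlinarith [abs_nonneg (rfun (m * l))]
  · have hb := abs_rfun_le_half h.le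
    rw [div_le_iff₀ hm0]
    nlinarith [abs_nonneg (rfun (m * l))]


lemma exp_succ_eq {t : ℝ} (n : ℕ) :
    Real.exp (-((n : ℝ) + 1) * t) = Real.exp (-t) ^ (n + 1) := by
  rw [← Real.exp_nat_mul]
  congr 1
  push_cast
  ring

lemma hasSum_exp_neg {t : ℝ} (ht : 0 < t) :
    HasSum (fun n : ℕ => Real.exp (-((n : ℝ) + 1) * t))
      (Real.exp (-t) / (1 - Real.exp (-t))) := by
  have hq0 : (0:ℝ) ≤ Real.exp (-t) := (Real.exp_pos _).le
  have hq1 : Real.exp (-t) < 1 := exp_neg_lt_one ht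
  have h := (hasSum_geometric_of_lt_one hq0 hq1).mul_left (Real.exp (-t))
  rw [div_eq_mul_inv]
  refine h.congr_fun fun n => ?_  -- might not exist; fallback below
  rw [exp_succ_eq, pow_succ, mul_comm]

lemma hasSum_exp_div {t : ℝ} (ht : 0 < t) :
    HasSum (fun n : ℕ => Real.exp (-((n : ℝ) + 1) * t) / ((n : ℝ) + 1))
      (-Real.log (1 - Real.exp (-t))) := by
  have habs : |Real.exp (-t)| < 1 := by
    rw [abs_of_pos (Real.exp_pos _)]; exact exp_neg_lt_one ht
  have h := Real.hasSum_pow_div_log_of_abs_lt_one habs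
  refine h.congr_fun fun n => ?_
  rw [exp_succ_eq]

lemma hasSum_inv_sq : HasSum (fun n : ℕ => 1 / ((n : ℝ) + 1) ^ 2) (Real.pi ^ 2 / 6) := by
  have h := (hasSum_nat_add_iff' (f := fun n : ℕ => (1 : ℝ) / (n : ℝ) ^ 2) 1).mpr hasSum_zeta_two
  simp only [Finset.range_one, Finset.sum_singleton, Nat.cast_zero] at h
  norm_num at h
  refine h.congr_fun fun n => ?_
  ring_nf

lemma hasSum_telescope (N : ℕ) (hN : 1 ≤ N) :
    HasSum (fun i : ℕ => 1 / ((i : ℝ) + N) - 1 / ((i : ℝ) + N + 1)) (1 / (N : ℝ)) := by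
  have hNpos : (0:ℝ) < N := by exact_mod_cast hN
  have hnn : ∀ i : ℕ, 0 ≤ 1 / ((i : ℝ) + N) - 1 / ((i : ℝ) + N + 1) := by
    intro i
    have h1 : (0:ℝ) < (i : ℝ) + N := by positivity
    have h2 : (0:ℝ) < (i : ℝ) + N + 1 := by positivity
    rw [sub_nonneg]
    apply one_div_le_one_div_of_le h1
    linarith
  rw [hasSum_iff_tendsto_nat_of_nonneg hnn]
  have key : ∀ k : ℕ, ∑ i ∈ Finset.range k, (1 / ((i : ℝ) + N) - 1 / ((i : ℝ) + N + 1))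
      = 1 / (N : ℝ) - 1 / ((k : ℝ) + N) := by
    intro k
    induction k with
    | zero => simp
    | succ k ih => rw [Finset.sum_range_succ, ih]; push_cast; ring
  simp only [key]
  have h0 : Filter.Tendsto (fun k : ℕ => 1 / ((k : ℝ) + N)) Filter.atTop (nhds 0) := by
    have : Filter.Tendsto (fun k : ℕ => ((k : ℝ) + N)) Filter.atTop Filter.atTop :=
      Filter.tendsto_atTop_add_const_right _ _ tendsto_natCast_atTop_atTop
    simp only [one_div]; exact this.inv_tendsto_atTop
  simpa using (tendsto_const_nhds (x := 1 / (N:ℝ))).sub h0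


lemma summable_exp_sq {t : ℝ} (ht : 0 < t) :
    Summable (fun n : ℕ => Real.exp (-((n : ℝ) + 1) * t) / ((n : ℝ) + 1) ^ 2) := by
  refine Summable.of_nonneg_of_le (fun n => by positivity) (fun n => ?_)
    (hasSum_exp_neg ht).summable
  have h1 : (1:ℝ) ≤ ((n : ℝ) + 1) ^ 2 := by nlinarith [Nat.cast_nonneg (α := ℝ) n]
  calc Real.exp (-((n : ℝ) + 1) * t) / ((n : ℝ) + 1) ^ 2
      ≤ Real.exp (-((n : ℝ) + 1) * t) / 1 := by
        apply div_le_div_of_nonneg_left (Real.exp_pos _).le (by norm_num) h1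
    _ = Real.exp (-((n : ℝ) + 1) * t) := by rw [div_one]

lemma summable_ffun {t : ℝ} (ht : 0 < t) :
    Summable (fun n : ℕ => ffun (((n : ℝ) + 1) * t) / ((n : ℝ) + 1) ^ 2) := by
  refine Summable.of_nonneg_of_le
    (fun n => div_nonneg ffun_nonneg (by positivity)) (fun n => ?_)
    hasSum_inv_sq.summable
  apply div_le_div_of_nonneg_right ?_ (by positivity)
  exact ffun_le_one (by positivity)

lemma ffun_tsum_le {t : ℝ} (ht : 0 < t) (ht1 : t ≤ 1) :
    ∑' n : ℕ, ffun (((n : ℝ) + 1) * t) / ((n : ℝ) + 1) ^ 2 ≤ 3 * t := by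
  set h : ℕ → ℝ := fun n => ffun (((n : ℝ) + 1) * t) / ((n : ℝ) + 1) ^ 2 with hdef
  have hsum : Summable h := summable_ffun ht
  set N : ℕ := ⌊1 / t⌋₊ with hNdef
  have h1t : (1:ℝ) ≤ 1 / t := one_le_one_div ht ht1
  have hN1 : 1 ≤ N := Nat.le_floor (by exact_mod_cast h1t)
  have hNpos : (0:ℝ) < N := by exact_mod_cast hN1
  have hNle : (N : ℝ) ≤ 1 / t := Nat.floor_le (by positivity)
  have hNgt : 1 / t < (N : ℝ) + 1 := Nat.lt_floor_add_one _
  have hsplit := Summable.sum_add_tsum_nat_add N hsum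
  rw [← hsplit]
  have hhead : ∑ i ∈ Finset.range N, h i ≤ t := by
    have hle : ∀ i ∈ Finset.range N, h i ≤ t ^ 2 := by
      intro i _
      have hm : (0:ℝ) < (i : ℝ) + 1 := by positivity
      have := ffun_le_sq (x := ((i : ℝ) + 1) * t) (by positivity)
      rw [hdef]
      simp only []
      rw [div_le_iff₀ (by positivity)]
      calc ffun (((i : ℝ) + 1) * t) ≤ (((i : ℝ) + 1) * t) ^ 2 := this
        _ = t ^ 2 * ((i : ℝ) + 1) ^ 2 := by ring
    calc ∑ i ∈ Finset.range N, h i ≤ ∑ _i ∈ Finset.range N, t ^ 2 :=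
          Finset.sum_le_sum hle
      _ = N * t ^ 2 := by rw [Finset.sum_const, Finset.card_range]; ring
      _ ≤ (1 / t) * t ^ 2 := by nlinarith
      _ = t := by rw [sq]; field_simp
  have htail : ∑' i : ℕ, h (i + N) ≤ 2 * t := by
    have hteles := hasSum_telescope N hN1
    have hterm : ∀ i : ℕ, h (i + N) ≤ 1 / ((i : ℝ) + N) - 1 / ((i : ℝ) + N + 1) := by
      intro i
      have hiN : (0:ℝ) < (i : ℝ) + N := by positivity
      have hiN1 : (0:ℝ) < (i : ℝ) + N + 1 := by positivity
      have hcast : ((i + N : ℕ) : ℝ) = (i : ℝ) + N := by push_cast; ring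
      have hf1 : ffun ((((i + N : ℕ) : ℝ) + 1) * t) ≤ 1 := ffun_le_one (by rw [hcast]; positivity)
      rw [hcast] at hf1
      have : h (i + N) ≤ 1 / ((i : ℝ) + N + 1) ^ 2 := by
        rw [hdef]
        simp only [hcast]
        exact div_le_div_of_nonneg_right hf1 (by positivity)
      have e1 : 1 / ((i : ℝ) + N) - 1 / ((i : ℝ) + N + 1)
          = 1 / (((i : ℝ) + N) * ((i : ℝ) + N + 1)) := by
        field_simp
        ring
      refine this.trans ?_
      rw [e1]
      apply one_div_le_one_div_of_le (mul_pos hiN hiN1)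
      nlinarith
    calc ∑' i : ℕ, h (i + N)
        ≤ ∑' i : ℕ, (1 / ((i : ℝ) + N) - 1 / ((i : ℝ) + N + 1)) :=
          Summable.tsum_le_tsum hterm ((summable_nat_add_iff N).mpr hsum) hteles.summable
      _ = 1 / (N : ℝ) := hteles.tsum_eq
      _ ≤ 2 * t := by
          rw [div_le_iff₀ hNpos]
          have hN1' : (1:ℝ) ≤ N := by exact_mod_cast hN1
          have hmul := mul_lt_mul_of_pos_right hNgt ht
          have h1 : (1 / t) * t = 1 := by field_simp
          nlinarith
  linarith

end SelbergAux

set_option maxHeartbeats 1000000 in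
open SelbergAux in
/-- Wolpert's estimate: for fixed `s > 0`, as `ℓ → 0⁺`,
`Σ_{n≥1} e^{-nsℓ}/(n(1−e^{-nℓ})) = π²/(6ℓ) + (s − 1/2) log(1 − e^{-sℓ}) + O(1)`. -/
theorem selberg_series_small_length_expansion (s : ℝ) (hs : 0 < s) :
    ∃ C > (0 : ℝ), ∃ ℓ₀ > (0 : ℝ), ∀ ℓ : ℝ, 0 < ℓ → ℓ < ℓ₀ →
      Summable (fun n : ℕ => Real.exp (-((n : ℝ) + 1) * s * ℓ) /
        (((n : ℝ) + 1) * (1 - Real.exp (-((n : ℝ) + 1) * ℓ)))) ∧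
      |(∑' n : ℕ, Real.exp (-((n : ℝ) + 1) * s * ℓ) /
          (((n : ℝ) + 1) * (1 - Real.exp (-((n : ℝ) + 1) * ℓ))))
        - Real.pi ^ 2 / (6 * ℓ)
        - (s - 1 / 2) * Real.log (1 - Real.exp (-s * ℓ))| ≤ C := by
  refine ⟨3 * s + 2 / s, by positivity, 1 / s, by positivity, fun ℓ hℓ hℓ' => ?_⟩
  have ht : 0 < s * ℓ := mul_pos hs hℓ
  set t := s * ℓ with htdef
  have ht1 : t < 1 := by
    have h := mul_lt_mul_of_pos_left hℓ' hs
    rwa [mul_one_div, div_self (ne_of_gt hs)] at h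
  have hexp := hasSum_exp_neg ht
  have hL := hasSum_exp_div ht
  have hG : Summable (fun n : ℕ => Real.exp (-((n:ℝ)+1)*t) / ((n:ℝ)+1)^2) := summable_exp_sq ht
  have eexp : ∀ n : ℕ, Real.exp (-((n:ℝ)+1) * s * ℓ) = Real.exp (-((n:ℝ)+1) * t) :=
    fun n => by rw [htdef, mul_assoc]
  set SA := ∑' n : ℕ, Real.exp (-((n:ℝ)+1)*t) / ((n:ℝ)+1)^2 with hSAdef
  set L : ℝ := Real.log (1 - Real.exp (-t)) with hLdef
  -- the three pieces
  have hAf : HasSum (fun n : ℕ => Real.exp (-((n:ℝ)+1)*t) / (((n:ℝ)+1)^2 * ℓ)) (SA / ℓ) :=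
    (hG.hasSum.div_const ℓ).congr_fun fun n => (div_div _ _ _).symm
  have hBf : HasSum (fun n : ℕ => Real.exp (-((n:ℝ)+1)*t) / (2 * ((n:ℝ)+1))) ((-L) / 2) :=
    (hL.div_const 2).congr_fun fun n => by rw [div_div, mul_comm 2 ((n:ℝ)+1)]
  have hRb : ∀ n : ℕ, |Real.exp (-((n:ℝ)+1)*t) * rfun (((n:ℝ)+1)*ℓ) / ((n:ℝ)+1)|
      ≤ 2 * ℓ * Real.exp (-((n:ℝ)+1)*t) := by
    intro n
    have hm : (1:ℝ) ≤ (n:ℝ)+1 := by have := Nat.cast_nonneg (α := ℝ) n; linarith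
    have hdiv := abs_rfun_div_le (m := (n:ℝ)+1) (l := ℓ) hm hℓ
    have hE := (Real.exp_pos (-((n:ℝ)+1)*t)).le
    rw [abs_div, abs_mul, abs_of_nonneg hE, abs_of_pos (show (0:ℝ) < (n:ℝ)+1 by linarith),
      mul_div_assoc]
    calc Real.exp (-((n:ℝ)+1)*t) * (|rfun (((n:ℝ)+1)*ℓ)| / ((n:ℝ)+1))
        ≤ Real.exp (-((n:ℝ)+1)*t) * (2 * ℓ) := mul_le_mul_of_nonneg_left hdiv hE
      _ = 2 * ℓ * Real.exp (-((n:ℝ)+1)*t) := by ring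
  have hRabs : Summable (fun n : ℕ =>
      |Real.exp (-((n:ℝ)+1)*t) * rfun (((n:ℝ)+1)*ℓ) / ((n:ℝ)+1)|) :=
    Summable.of_nonneg_of_le (fun n => abs_nonneg _) hRb (hexp.summable.mul_left (2 * ℓ))
  have hRsum : Summable (fun n : ℕ =>
      Real.exp (-((n:ℝ)+1)*t) * rfun (((n:ℝ)+1)*ℓ) / ((n:ℝ)+1)) :=
    summable_abs_iff.mp hRabs
  set RS := ∑' n : ℕ, Real.exp (-((n:ℝ)+1)*t) * rfun (((n:ℝ)+1)*ℓ) / ((n:ℝ)+1) with hRSdef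
  have hRSb : |RS| ≤ 2 / s := by
    have hRnorm : Summable (fun n : ℕ =>
        ‖Real.exp (-((n:ℝ)+1)*t) * rfun (((n:ℝ)+1)*ℓ) / ((n:ℝ)+1)‖) := by
      simpa only [Real.norm_eq_abs] using hRabs
    have h1' := norm_tsum_le_tsum_norm hRnorm
    simp only [Real.norm_eq_abs] at h1'
    have h1 : |RS| ≤ ∑' n : ℕ, |Real.exp (-((n:ℝ)+1)*t) * rfun (((n:ℝ)+1)*ℓ) / ((n:ℝ)+1)| := h1'
    have h2 : ∑' n : ℕ, |Real.exp (-((n:ℝ)+1)*t) * rfun (((n:ℝ)+1)*ℓ) / ((n:ℝ)+1)|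
        ≤ ∑' n : ℕ, 2 * ℓ * Real.exp (-((n:ℝ)+1)*t) :=
      Summable.tsum_le_tsum hRb hRabs (hexp.summable.mul_left (2 * ℓ))
    have h3 : ∑' n : ℕ, 2 * ℓ * Real.exp (-((n:ℝ)+1)*t)
        = 2 * ℓ * (Real.exp (-t) / (1 - Real.exp (-t))) := (hexp.mul_left (2 * ℓ)).tsum_eq
    have h4 : Real.exp (-t) / (1 - Real.exp (-t)) ≤ 1 / t := by
      rw [div_le_div_iff₀ (one_sub_exp_neg_pos ht) ht]
      have := mul_exp_neg_le (x := t)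
      nlinarith
    have h5 : 2 * ℓ * (Real.exp (-t) / (1 - Real.exp (-t))) ≤ 2 * ℓ * (1 / t) :=
      mul_le_mul_of_nonneg_left h4 (by positivity)
    have h6 : 2 * ℓ * (1 / t) = 2 / s := by rw [htdef]; field_simp
    linarith
  -- main termwise identity
  have hmain : ∀ n : ℕ, Real.exp (-((n:ℝ)+1) * s * ℓ) /
      (((n:ℝ)+1) * (1 - Real.exp (-((n:ℝ)+1) * ℓ)))
      = Real.exp (-((n:ℝ)+1)*t) / (((n:ℝ)+1)^2 * ℓ)
        + Real.exp (-((n:ℝ)+1)*t) / (2 * ((n:ℝ)+1))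
        + Real.exp (-((n:ℝ)+1)*t) * rfun (((n:ℝ)+1)*ℓ) / ((n:ℝ)+1) := by
    intro n
    have hm0 : (0:ℝ) < (n:ℝ)+1 := by positivity
    have hml : 0 < ((n:ℝ)+1) * ℓ := mul_pos hm0 hℓ
    have h1 : 0 < 1 - Real.exp (-(((n:ℝ)+1) * ℓ)) := one_sub_exp_neg_pos hml
    have hne : -((n:ℝ)+1) * ℓ = -(((n:ℝ)+1) * ℓ) := by ring
    rw [eexp n, rfun, hne]
    field_simp
    ring
  have hTot : HasSum (fun n : ℕ => Real.exp (-((n:ℝ)+1) * s * ℓ) /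
      (((n:ℝ)+1) * (1 - Real.exp (-((n:ℝ)+1) * ℓ)))) (SA / ℓ + (-L) / 2 + RS) :=
    ((hAf.add hBf).add hRsum.hasSum).congr_fun fun n => hmain n
  refine ⟨hTot.summable, ?_⟩
  rw [hTot.tsum_eq]
  -- the D part
  have hInner : HasSum (fun n : ℕ => Real.exp (-((n:ℝ)+1)*t) / ((n:ℝ)+1)^2
      - 1 / ((n:ℝ)+1)^2 + t * (Real.exp (-((n:ℝ)+1)*t) / ((n:ℝ)+1)))
      (SA - Real.pi ^ 2 / 6 + t * (-L)) :=
    (hG.hasSum.sub hasSum_inv_sq).add (hL.mul_left t)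
  have hpt : ∀ n : ℕ, ffun (((n:ℝ)+1)*t) / ((n:ℝ)+1)^2
      = -(Real.exp (-((n:ℝ)+1)*t) / ((n:ℝ)+1)^2
        - 1 / ((n:ℝ)+1)^2 + t * (Real.exp (-((n:ℝ)+1)*t) / ((n:ℝ)+1))) := by
    intro n
    have hm0 : (0:ℝ) < (n:ℝ)+1 := by positivity
    have hne2 : -(((n:ℝ)+1) * t) = -((n:ℝ)+1) * t := by ring
    simp only [ffun, hne2]
    field_simp
    ring
  have hFf : HasSum (fun n : ℕ => ffun (((n:ℝ)+1)*t) / ((n:ℝ)+1)^2)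
      (-(SA - Real.pi ^ 2 / 6 + t * (-L))) :=
    hInner.neg.congr_fun fun n => hpt n
  have hDb : |SA - Real.pi ^ 2 / 6 + t * (-L)| ≤ 3 * t := by
    have h2 := hFf.tsum_eq
    have h3 := ffun_tsum_le ht ht1.le
    have h4 : 0 ≤ ∑' n : ℕ, ffun (((n:ℝ)+1)*t) / ((n:ℝ)+1)^2 :=
      tsum_nonneg fun n => div_nonneg ffun_nonneg (by positivity)
    rw [abs_le]
    constructor <;> nlinarith [ht.le]
  -- final assembly
  have hst : -s * ℓ = -t := by rw [htdef]; ring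
  rw [hst]
  have hX : SA / ℓ + (-L) / 2 + RS - Real.pi ^ 2 / (6 * ℓ) - (s - 1 / 2) * L
      = (SA - Real.pi ^ 2 / 6 + t * (-L)) / ℓ + RS := by
    rw [htdef]
    field_simp
    ring
  rw [hX]
  have h7 : |(SA - Real.pi ^ 2 / 6 + t * (-L)) / ℓ| ≤ 3 * s := by
    rw [abs_div, abs_of_pos hℓ, div_le_iff₀ hℓ]
    calc |SA - Real.pi ^ 2 / 6 + t * (-L)| ≤ 3 * t := hDb
      _ = 3 * s * ℓ := by rw [htdef]; ring
  calc |(SA - Real.pi ^ 2 / 6 + t * (-L)) / ℓ + RS|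
      ≤ |(SA - Real.pi ^ 2 / 6 + t * (-L)) / ℓ| + |RS| := abs_add_le _ _
    _ ≤ 3 * s + 2 / s := add_le_add h7 hRSb
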